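/- arXiv:1711.04466 — 2 statements merged into one kernel-verified Lean document; each statement's English description precedes it below -/
import Mathlib

section
/- Let Y be a discrete random variable, S a finite set of discrete random variables with Y ∉ S, with joint distribution P, and assume Y has multiple Markov boundaries within S under P; fix one of them, M₀. Then for every δ > 0 there exists a joint distribution P' of (S, Y) on the same finite value sets with total variation distance d(P, P') < δ such that under P', M₀ is the unique Markov boundary of Y within S. -/
open scoped BigOperators

noncomputable section

/-- `p` is a probability mass function on the finite type `Ω`. -/
def IsDist {Ω : Type*} [Fintype Ω] (p : Ω → ℝ) : Prop :=
  (∀ w, 0 ≤ p w) ∧ ∑ w, p w = 1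

/-- Total variation distance between two distributions on the same finite type. -/
def tvDist {Ω : Type*} [Fintype Ω] (p q : Ω → ℝ) : ℝ :=
  (∑ w, |p w - q w|) / 2

variable {ι : Type*} [Fintype ι] [DecidableEq ι]
variable {α : ι → Type*} [∀ i, Fintype (α i)] [∀ i, DecidableEq (α i)]

/-- Marginal probability, under joint pmf `p`, of the event that the variables in the
collection `A` take the values prescribed by the configuration `x`. -/
def margProb (p : (∀ i, α i) → ℝ) (A : Finset ι) (x : ∀ i, α i) : ℝ :=
  ∑ w : ∀ i, α i, if ∀ i ∈ A, w i = x i then p w else 0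

/-- Conditional independence of the collections `A` and `B` given the collection `C`:
`f(a, b | c) = f(a | c) f(b | c)` whenever `f(c) > 0` (stated in multiplied-out form). -/
def CondIndep (p : (∀ i, α i) → ℝ) (A B C : Finset ι) : Prop :=
  ∀ x : ∀ i, α i, 0 < margProb p C x →
    margProb p (A ∪ B ∪ C) x * margProb p C x =
      margProb p (A ∪ C) x * margProb p (B ∪ C) x

/-- `M` is a Markov blanket of the variable `y` within the collection `T`. -/
def MarkovBlanket (p : (∀ i, α i) → ℝ) (y : ι) (T M : Finset ι) : Prop :=
  M ⊆ T ∧ CondIndep p {y} (T \ M) M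

/-- `M` is a Markov boundary of `y` within `T`: a Markov blanket no proper subset of
which is a Markov blanket. -/
def MarkovBoundary (p : (∀ i, α i) → ℝ) (y : ι) (T M : Finset ι) : Prop :=
  MarkovBlanket p y T M ∧ ∀ M' ⊂ M, ¬ MarkovBlanket p y T M'

/-- Mutual information between the collections `A` and `B`
(with the convention `0 · log(junk) = 0` on zero-probability terms). -/
def MI (p : (∀ i, α i) → ℝ) (A B : Finset ι) : ℝ :=
  ∑ w : ∀ i, α i, p w *
    Real.log (margProb p (A ∪ B) w / (margProb p A w * margProb p B w))

/-- Conditional mutual information between collections `A` and `B` given `C`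
(with the convention `0 · log(junk) = 0` on zero-probability terms). -/
def CMI (p : (∀ i, α i) → ℝ) (A B C : Finset ι) : ℝ :=
  ∑ w : (∀ i, α i), p w *
    Real.log ((margProb p (A ∪ B ∪ C) w * margProb p C w) /
      (margProb p (A ∪ C) w * margProb p (B ∪ C) w))


variable [∀ i, Nonempty (α i)]

section MBAux
set_option linter.unusedSectionVars false

variable {ι : Type*} [Fintype ι] [DecidableEq ι]
variable {α : ι → Type*} [∀ i, Fintype (α i)] [∀ i, DecidableEq (α i)]

/-- `f` depends only on the coordinates in `A`. -/
def LocalOn (A : Finset ι) (f : (∀ i, α i) → ℝ) : Prop :=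
  ∀ w w' : ∀ i, α i, (∀ i ∈ A, w i = w' i) → f w = f w'

lemma LocalOn.mono {A A' : Finset ι} {f : (∀ i, α i) → ℝ} (h : LocalOn A f)
    (hAA : A ⊆ A') : LocalOn A' f :=
  fun w w' hw => h w w' (fun i hi => hw i (hAA hi))

lemma margProb_nonneg {p : (∀ i, α i) → ℝ} (hp : ∀ w, 0 ≤ p w) (A : Finset ι)
    (x : ∀ i, α i) : 0 ≤ margProb p A x := by
  refine Finset.sum_nonneg fun w _ => ?_
  split <;> simp [hp w]

lemma self_le_margProb {p : (∀ i, α i) → ℝ} (hp : ∀ w, 0 ≤ p w) (A : Finset ι)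
    (x : ∀ i, α i) : p x ≤ margProb p A x := by
  have h := Finset.single_le_sum (f := fun w => if ∀ i ∈ A, w i = x i then p w else 0)
    (fun w _ => by split <;> simp [hp w]) (Finset.mem_univ x)
  simpa [margProb] using h

lemma margProb_mono {p : (∀ i, α i) → ℝ} (hp : ∀ w, 0 ≤ p w) {A A' : Finset ι}
    (hAA : A ⊆ A') (x : ∀ i, α i) : margProb p A' x ≤ margProb p A x := by
  refine Finset.sum_le_sum fun w _ => ?_
  by_cases h : ∀ i ∈ A', w i = x i
  · rw [if_pos h, if_pos fun i hi => h i (hAA hi)]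
  · rw [if_neg h]
    split <;> simp [hp w]

lemma margProb_empty {p : (∀ i, α i) → ℝ} (x : ∀ i, α i) :
    margProb p ∅ x = ∑ w, p w := by
  simp [margProb]

lemma margProb_le_one {p : (∀ i, α i) → ℝ} (hp : IsDist p) (A : Finset ι)
    (x : ∀ i, α i) : margProb p A x ≤ 1 := by
  have := margProb_mono hp.1 (Finset.empty_subset A) x
  rwa [margProb_empty, hp.2] at this

lemma margProb_localOn (p : (∀ i, α i) → ℝ) (A : Finset ι) :
    LocalOn A (margProb p A) := by
  intro x x' hxx
  refine Finset.sum_congr rfl fun w _ => ?_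
  have : (∀ i ∈ A, w i = x i) ↔ (∀ i ∈ A, w i = x' i) :=
    ⟨fun h i hi => (h i hi).trans (hxx i hi), fun h i hi => (h i hi).trans (hxx i hi).symm⟩
  by_cases h : ∀ i ∈ A, w i = x i
  · rw [if_pos h, if_pos (this.1 h)]
  · rw [if_neg h, if_neg (fun h' => h (this.2 h'))]

/-- sum over a class with congruent base points. -/
lemma sumClass_congr (f : (∀ i, α i) → ℝ) (A : Finset ι) {x x' : ∀ i, α i}
    (h : ∀ i ∈ A, x i = x' i) :
    ∑ w : ∀ i, α i, (if ∀ i ∈ A, w i = x i then f w else 0)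
      = ∑ w : ∀ i, α i, (if ∀ i ∈ A, w i = x' i then f w else 0) := by
  refine Finset.sum_congr rfl fun w _ => ?_
  have hiff : (∀ i ∈ A, w i = x i) ↔ (∀ i ∈ A, w i = x' i) :=
    ⟨fun hh i hi => (hh i hi).trans (h i hi), fun hh i hi => (hh i hi).trans (h i hi).symm⟩
  by_cases hc : ∀ i ∈ A, w i = x i
  · rw [if_pos hc, if_pos (hiff.1 hc)]
  · rw [if_neg hc, if_neg fun h' => hc (hiff.2 h')]

end MBAux
section MBAux2
set_option linter.unusedSectionVars false

variable {ι : Type*} [Fintype ι] [DecidableEq ι]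
variable {α : ι → Type*} [∀ i, Fintype (α i)] [∀ i, DecidableEq (α i)]

/-- Number of configurations of the coordinates outside `A`. -/
def Kc (α : ι → Type*) [∀ i, Fintype (α i)] (A : Finset ι) : ℕ :=
  Fintype.card (∀ i : {i : ι // i ∉ A}, α i)

/-- the equivalence between a class and the outside-configurations. -/
def classEquiv (A : Finset ι) (x : ∀ i, α i) :
    {w : ∀ i, α i // ∀ i ∈ A, w i = x i} ≃ (∀ i : {i : ι // i ∉ A}, α i) where
  toFun w := fun j => w.1 j.1
  invFun t := ⟨fun i => if h : i ∈ A then x i else t ⟨i, h⟩, fun i hi => dif_pos hi⟩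
  left_inv := by
    rintro ⟨w, hw⟩
    ext i
    dsimp only
    by_cases h : i ∈ A
    · rw [dif_pos h, hw i h]
    · rw [dif_neg h]
  right_inv := by
    intro t
    ext j
    exact dif_neg j.2

lemma count_class (A : Finset ι) (x : ∀ i, α i) :
    ∑ w : ∀ i, α i, (if ∀ i ∈ A, w i = x i then (1 : ℝ) else 0) = (Kc α A : ℝ) := by
  rw [Finset.sum_boole]
  norm_num
  rw [← Fintype.card_subtype]
  exact Fintype.card_congr (classEquiv A x)

lemma sum_class_local {f : (∀ i, α i) → ℝ} {A : Finset ι} (hf : LocalOn A f)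
    (x : ∀ i, α i) :
    ∑ w : ∀ i, α i, (if ∀ i ∈ A, w i = x i then f w else 0) = (Kc α A : ℝ) * f x := by
  have : ∀ w : ∀ i, α i, (if ∀ i ∈ A, w i = x i then f w else 0)
      = (if ∀ i ∈ A, w i = x i then (1:ℝ) else 0) * f x := by
    intro w
    by_cases h : ∀ i ∈ A, w i = x i
    · rw [if_pos h, if_pos h, one_mul, hf w x h]
    · rw [if_neg h, if_neg h, zero_mul]
  rw [Finset.sum_congr rfl fun w _ => this w, ← Finset.sum_mul, count_class]

lemma sum_margProb_mul_local {p f : (∀ i, α i) → ℝ} {A : Finset ι} (hf : LocalOn A f) :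
    ∑ w : ∀ i, α i, margProb p A w * f w = (Kc α A : ℝ) * ∑ w : ∀ i, α i, p w * f w := by
  have step1 : ∑ w : ∀ i, α i, margProb p A w * f w
      = ∑ w : ∀ i, α i, ∑ w' : ∀ i, α i,
          (if ∀ i ∈ A, w' i = w i then p w' else 0) * f w := by
    refine Finset.sum_congr rfl fun w _ => ?_
    rw [margProb, Finset.sum_mul]
  rw [step1, Finset.sum_comm, Finset.mul_sum]
  refine Finset.sum_congr rfl fun w' _ => ?_
  have h1 : ∀ w : ∀ i, α i, (if ∀ i ∈ A, w' i = w i then p w' else 0) * f w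
      = p w' * (if ∀ i ∈ A, w i = w' i then f w else 0) := by
    intro w
    have hiff : (∀ i ∈ A, w' i = w i) ↔ (∀ i ∈ A, w i = w' i) :=
      ⟨fun h i hi => (h i hi).symm, fun h i hi => (h i hi).symm⟩
    by_cases h : ∀ i ∈ A, w i = w' i
    · rw [if_pos (hiff.2 h), if_pos h]
    · rw [if_neg (fun h2 => h (hiff.1 h2)), if_neg h, zero_mul, mul_zero]
  rw [Finset.sum_congr rfl fun w _ => h1 w, ← Finset.mul_sum, sum_class_local hf w']
  ring

end MBAux2
section MBAux3
set_option linter.unusedSectionVars false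

variable {ι : Type*} [Fintype ι] [DecidableEq ι]
variable {α : ι → Type*} [∀ i, Fintype (α i)] [∀ i, DecidableEq (α i)]

lemma cond_insert {y : ι} {A : Finset ι} (hyA : y ∉ A) (w x : ∀ i, α i) (v : α y) :
    (∀ i ∈ insert y A, w i = Function.update x y v i) ↔
      (w y = v ∧ ∀ i ∈ A, w i = x i) := by
  rw [Finset.forall_mem_insert]
  constructor
  · rintro ⟨h1, h2⟩
    refine ⟨by simpa using h1, fun i hi => ?_⟩
    have : i ≠ y := fun h => hyA (h ▸ hi)
    simpa [Function.update_of_ne this] using h2 i hi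
  · rintro ⟨h1, h2⟩
    refine ⟨by simpa using h1, fun i hi => ?_⟩
    have : i ≠ y := fun h => hyA (h ▸ hi)
    simpa [Function.update_of_ne this] using h2 i hi

/-- Split a sum over all configurations according to the value at `y`. -/
lemma sum_split_y (y : ι) (f : (∀ i, α i) → ℝ) :
    ∑ w : ∀ i, α i, f w = ∑ v : α y, ∑ w : ∀ i, α i, (if w y = v then f w else 0) := by
  rw [Finset.sum_comm]
  refine Finset.sum_congr rfl fun w _ => ?_
  simp

/-- transport a fiber-sum to another fiber. -/
lemma fiber_shift (y : ι) (f : (∀ i, α i) → ℝ) (v v' : α y) :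
    ∑ w : ∀ i, α i, (if w y = v then f w else 0)
      = ∑ w : ∀ i, α i, (if w y = v' then f (Function.update w y v) else 0) := by
  rw [← Finset.sum_filter, ← Finset.sum_filter]
  refine Finset.sum_nbij' (fun w => Function.update w y v')
    (fun w => Function.update w y v) ?_ ?_ ?_ ?_ ?_
  · intro w hw; simp
  · intro w hw; simp
  · intro w hw
    simp only [Finset.mem_filter] at hw
    show Function.update (Function.update w y v') y v = w
    rw [Function.update_idem, ← hw.2, Function.update_eq_self]
  · intro w hw
    simp only [Finset.mem_filter] at hw
    show Function.update (Function.update w y v) y v' = w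
    rw [Function.update_idem, ← hw.2, Function.update_eq_self]
  · intro w hw
    simp only [Finset.mem_filter] at hw
    show f w = f (Function.update (Function.update w y v') y v)
    rw [Function.update_idem, ← hw.2, Function.update_eq_self]

lemma sum_margProb_update {p : (∀ i, α i) → ℝ} {y : ι} {A : Finset ι} (hyA : y ∉ A)
    (x : ∀ i, α i) :
    ∑ v : α y, margProb p (insert y A) (Function.update x y v) = margProb p A x := by
  unfold margProb
  rw [Finset.sum_comm]
  refine Finset.sum_congr rfl fun w _ => ?_
  have h1 : ∀ v : α y, (if ∀ i ∈ insert y A, w i = Function.update x y v i then p w else 0)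
      = (if w y = v then (if ∀ i ∈ A, w i = x i then p w else 0) else 0) := by
    intro v
    rw [if_congr (cond_insert hyA w x v) rfl rfl]
    by_cases h1 : w y = v <;> by_cases h2 : ∀ i ∈ A, w i = x i <;>
      simp [h1, h2]
  rw [Finset.sum_congr rfl fun v _ => h1 v]
  simp

end MBAux3
section MBAux4
set_option linter.unusedSectionVars false

variable {ι : Type*} [Fintype ι] [DecidableEq ι]
variable {α : ι → Type*} [∀ i, Fintype (α i)] [∀ i, DecidableEq (α i)]
variable [∀ i, Nonempty (α i)]

/-- class sum of a function. -/
def Tsum (f : (∀ i, α i) → ℝ) (A : Finset ι) (x : ∀ i, α i) : ℝ :=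
  ∑ w : ∀ i, α i, if ∀ i ∈ A, w i = x i then f w else 0

lemma margProb_eq_Tsum (p : (∀ i, α i) → ℝ) (A : Finset ι) (x : ∀ i, α i) :
    margProb p A x = Tsum p A x := rfl

lemma Tsum_local {f : (∀ i, α i) → ℝ} {A : Finset ι} (hf : LocalOn A f)
    (x : ∀ i, α i) : Tsum f A x = (Kc α A : ℝ) * f x :=
  sum_class_local hf x

lemma Tsum_congr {f : (∀ i, α i) → ℝ} (A : Finset ι) {x x' : ∀ i, α i}
    (h : ∀ i ∈ A, x i = x' i) : Tsum f A x = Tsum f A x' :=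
  sumClass_congr f A h

lemma Tsum_pos {f : (∀ i, α i) → ℝ} (hf0 : ∀ w, 0 ≤ f w) {A : Finset ι}
    {x : ∀ i, α i} (hx : 0 < f x) : 0 < Tsum f A x := by
  have h1 : f x ≤ Tsum f A x := by
    have h := Finset.single_le_sum
      (f := fun w => if ∀ i ∈ A, w i = x i then f w else 0)
      (fun w _ => by split <;> simp [hf0 w]) (Finset.mem_univ x)
    simpa [Tsum] using h
  linarith

lemma Kc_pos (A : Finset ι) : 0 < (Kc α A : ℝ) := by
  have : 0 < Kc α A := Fintype.card_pos
  exact_mod_cast this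

section Core

variable {y : ι} {S : Finset ι} (pt q : (∀ i, α i) → ℝ)

/-- the perturbed distribution. -/
def pert (y : ι) (S : Finset ι) (pt q : (∀ i, α i) → ℝ) : (∀ i, α i) → ℝ :=
  fun w => pt w * (q w * margProb pt S w) / margProb pt (insert y S) w

lemma r_localOn : LocalOn S (margProb pt S) := margProb_localOn pt S

lemma qr_localOn (hqB : LocalOn (insert y S) q) :
    LocalOn (insert y S) (fun w => q w * margProb pt S w) := by
  intro w w' h
  show q w * margProb pt S w = q w' * margProb pt S w'
  rw [hqB w w' h, (r_localOn pt) w w' fun i hi => h i (Finset.mem_insert_of_mem hi)]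

/-- Core reduction: marginals of `pert` on subsets of `insert y S` are normalized
class sums of `q · r`. -/
lemma margProb_pert (hGpos : ∀ w, 0 < margProb pt (insert y S) w)
    (hqB : LocalOn (insert y S) q) {A : Finset ι} (hA : A ⊆ insert y S)
    (x : ∀ i, α i) :
    margProb (pert y S pt q) A x
      = (Kc α (insert y S) : ℝ)⁻¹ * Tsum (fun w => q w * margProb pt S w) A x := by
  set B := insert y S with hB
  set g : (∀ i, α i) → ℝ := fun w =>
    (if ∀ i ∈ A, w i = x i then q w * margProb pt S w else 0) / margProb pt B w
    with hg
  have hgloc : LocalOn B g := by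
    intro w w' h
    have h1 : (∀ i ∈ A, w i = x i) ↔ (∀ i ∈ A, w' i = x i) := by
      constructor
      · intro hh i hi; rw [← h i (hA hi)]; exact hh i hi
      · intro hh i hi; rw [h i (hA hi)]; exact hh i hi
    have h2 : q w * margProb pt S w = q w' * margProb pt S w' := qr_localOn pt q hqB w w' h
    have h3 := margProb_localOn pt B w w' h
    simp only [hg, h3]
    by_cases hc : ∀ i ∈ A, w i = x i
    · rw [if_pos hc, if_pos (h1.1 hc), h2]
    · rw [if_neg hc, if_neg fun hh => hc (h1.2 hh)]
  have key : margProb (pert y S pt q) A x = ∑ w : ∀ i, α i, pt w * g w := by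
    unfold margProb pert
    refine Finset.sum_congr rfl fun w _ => ?_
    simp only [hg]
    split
    · ring
    · simp
  rw [key]
  have h6 := sum_margProb_mul_local (p := pt) hgloc
  have h7 : ∑ w : ∀ i, α i, margProb pt B w * g w
      = Tsum (fun w => q w * margProb pt S w) A x := by
    unfold Tsum
    refine Finset.sum_congr rfl fun w _ => ?_
    simp only [hg]
    rw [mul_div_assoc']
    rw [mul_comm (margProb pt B w), mul_div_assoc, div_self (ne_of_gt (hGpos w)), mul_one]
  rw [h7] at h6
  rw [h6, inv_mul_cancel_left₀ (ne_of_gt (Kc_pos (α := α) B))]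

end Core
end MBAux4
section MBAux5
set_option linter.unusedSectionVars false

variable {ι : Type*} [Fintype ι] [DecidableEq ι]
variable {α : ι → Type*} [∀ i, Fintype (α i)] [∀ i, DecidableEq (α i)]
variable [∀ i, Nonempty (α i)]

lemma Tsum_split {y : ι} {A : Finset ι} (hyA : y ∉ A) (f : (∀ i, α i) → ℝ)
    (x : ∀ i, α i) :
    Tsum f A x = ∑ v : α y, Tsum f (insert y A) (Function.update x y v) := by
  unfold Tsum
  rw [Finset.sum_comm]
  refine Finset.sum_congr rfl fun w _ => ?_
  have h1 : ∀ v : α y,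
      (if ∀ i ∈ insert y A, w i = Function.update x y v i then f w else 0)
        = (if w y = v then (if ∀ i ∈ A, w i = x i then f w else 0) else 0) := by
    intro v
    rw [if_congr (cond_insert hyA w x v) rfl rfl]
    by_cases h1 : w y = v <;> by_cases h2 : ∀ i ∈ A, w i = x i <;> simp [h1, h2]
  rw [Finset.sum_congr rfl fun v _ => h1 v]
  simp

lemma Tsum_insert_shift {y : ι} {A : Finset ι} (hyA : y ∉ A) {f : (∀ i, α i) → ℝ}
    (hf : ∀ (w : ∀ i, α i) (v : α y), f (Function.update w y v) = f w)
    (x : ∀ i, α i) (v : α y) :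
    Tsum f (insert y A) (Function.update x y v) = Tsum f (insert y A) x := by
  unfold Tsum
  have h1 : ∀ w : ∀ i, α i,
      (if ∀ i ∈ insert y A, w i = Function.update x y v i then f w else 0)
        = (if w y = v then (if ∀ i ∈ A, w i = x i then f w else 0) else 0) := by
    intro w
    rw [if_congr (cond_insert hyA w x v) rfl rfl]
    by_cases h1 : w y = v <;> by_cases h2 : ∀ i ∈ A, w i = x i <;> simp [h1, h2]
  rw [Finset.sum_congr rfl fun w _ => h1 w]
  rw [fiber_shift y _ v (x y)]
  refine Finset.sum_congr rfl fun w _ => ?_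
  have h2 : (if ∀ i ∈ A, Function.update w y v i = x i then f (Function.update w y v) else 0)
      = (if ∀ i ∈ A, w i = x i then f w else 0) := by
    have hc : (∀ i ∈ A, Function.update w y v i = x i) ↔ (∀ i ∈ A, w i = x i) := by
      constructor
      · intro h i hi
        have hne : i ≠ y := fun hh => hyA (hh ▸ hi)
        simpa [Function.update_of_ne hne] using h i hi
      · intro h i hi
        have hne : i ≠ y := fun hh => hyA (hh ▸ hi)
        simpa [Function.update_of_ne hne] using h i hi
    rw [if_congr hc rfl rfl, hf w v]
  rw [h2]
  have hx : (∀ i ∈ insert y A, w i = x i) ↔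
      (w y = x y ∧ ∀ i ∈ A, w i = x i) := by
    have := cond_insert (α := α) hyA w x (x y)
    rwa [Function.update_eq_self] at this
  rw [if_congr hx rfl rfl]
  by_cases h1 : w y = x y <;> by_cases h2 : ∀ i ∈ A, w i = x i <;> simp [h1, h2]

section Core2

variable {y : ι} {S : Finset ι} {pt q : (∀ i, α i) → ℝ}

lemma Tsum_QR_B (hqB : LocalOn (insert y S) q) (x : ∀ i, α i) :
    Tsum (fun w => q w * margProb pt S w) (insert y S) x
      = (Kc α (insert y S) : ℝ) * (q x * margProb pt S x) :=
  Tsum_local (qr_localOn pt q hqB) x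

lemma r_update (hyS : y ∉ S) (x : ∀ i, α i) (v : α y) :
    margProb pt S (Function.update x y v) = margProb pt S x := by
  refine margProb_localOn pt S _ _ fun i hi => ?_
  have hne : i ≠ y := fun hh => hyS (hh ▸ hi)
  exact Function.update_of_ne hne v x

lemma Tsum_QR_S (hyS : y ∉ S) (hqB : LocalOn (insert y S) q)
    (hqsum : ∀ w : ∀ i, α i, ∑ v : α y, q (Function.update w y v) = 1)
    (x : ∀ i, α i) :
    Tsum (fun w => q w * margProb pt S w) S x
      = (Kc α (insert y S) : ℝ) * margProb pt S x := by
  rw [Tsum_split hyS]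
  have h1 : ∀ v : α y,
      Tsum (fun w => q w * margProb pt S w) (insert y S) (Function.update x y v)
        = (Kc α (insert y S) : ℝ) * margProb pt S x * q (Function.update x y v) := by
    intro v
    rw [Tsum_QR_B hqB, r_update hyS]
    ring
  rw [Finset.sum_congr rfl fun v _ => h1 v, ← Finset.mul_sum, hqsum x, mul_one]

lemma Tsum_QR_iM {M : Finset ι} (hqM : LocalOn (insert y M) q) (x : ∀ i, α i) :
    Tsum (fun w => q w * margProb pt S w) (insert y M) x
      = q x * Tsum (margProb pt S) (insert y M) x := by
  unfold Tsum
  rw [Finset.mul_sum]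
  refine Finset.sum_congr rfl fun w _ => ?_
  by_cases h : ∀ i ∈ insert y M, w i = x i
  · rw [if_pos h, if_pos h]
    show q w * margProb pt S w = q x * margProb pt S w
    rw [hqM w x h]
  · rw [if_neg h, if_neg h, mul_zero]

lemma Tsum_QR_M {M : Finset ι} (hyM : y ∉ M) (hqM : LocalOn (insert y M) q)
    (hqsum : ∀ w : ∀ i, α i, ∑ v : α y, q (Function.update w y v) = 1)
    (hyS : y ∉ S) (x : ∀ i, α i) :
    Tsum (fun w => q w * margProb pt S w) M x
      = Tsum (margProb pt S) (insert y M) x := by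
  rw [Tsum_split hyM]
  have h1 : ∀ v : α y,
      Tsum (fun w => q w * margProb pt S w) (insert y M) (Function.update x y v)
        = q (Function.update x y v) * Tsum (margProb pt S) (insert y M) x := by
    intro v
    rw [Tsum_QR_iM hqM, Tsum_insert_shift hyM (fun w v => r_update hyS w v)]
  rw [Finset.sum_congr rfl fun v _ => h1 v, ← Finset.sum_mul, hqsum x, one_mul]

end Core2
end MBAux5
section MBAux6
set_option linter.unusedSectionVars false

variable {ι : Type*} [Fintype ι] [DecidableEq ι]
variable {α : ι → Type*} [∀ i, Fintype (α i)] [∀ i, DecidableEq (α i)]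
variable [∀ i, Nonempty (α i)]

lemma union_set1 {y : ι} {S M : Finset ι} (hMS : M ⊆ S) :
    {y} ∪ (S \ M) ∪ M = insert y S := by
  ext i
  simp only [Finset.mem_union, Finset.mem_sdiff, Finset.mem_singleton, Finset.mem_insert]
  constructor
  · rintro ((h | ⟨h, _⟩) | h)
    · exact Or.inl h
    · exact Or.inr h
    · exact Or.inr (hMS h)
  · rintro (h | h)
    · exact Or.inl (Or.inl h)
    · by_cases hm : i ∈ M
      · exact Or.inr hm
      · exact Or.inl (Or.inr ⟨h, hm⟩)

lemma union_set2 {y : ι} {M : Finset ι} : {y} ∪ M = insert y M := by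
  ext i; simp [Finset.mem_insert]

lemma union_set3 {S M : Finset ι} (hMS : M ⊆ S) : (S \ M) ∪ M = S :=
  Finset.sdiff_union_of_subset hMS

section Core3

variable {y : ι} {S : Finset ι} {pt q : (∀ i, α i) → ℝ}

lemma sum_QR (hyS : y ∉ S)
    (hqsum : ∀ w : ∀ i, α i, ∑ v : α y, q (Function.update w y v) = 1) :
    ∑ w : ∀ i, α i, q w * margProb pt S w
      = ∑ w : ∀ i, α i, margProb pt (insert y S) w := by
  have v₀ : α y := Classical.arbitrary _
  have key1 : ∑ w : ∀ i, α i, q w * margProb pt S w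
      = ∑ w : ∀ i, α i, (if w y = v₀ then margProb pt S w else 0) := by
    rw [sum_split_y y]
    have h1 : ∀ v : α y, ∑ w : ∀ i, α i,
        (if w y = v then q w * margProb pt S w else 0)
        = ∑ w : ∀ i, α i, (if w y = v₀ then
            q (Function.update w y v) * margProb pt S w else 0) := by
      intro v
      rw [fiber_shift y _ v v₀]
      refine Finset.sum_congr rfl fun w _ => ?_
      rw [r_update hyS]
    rw [Finset.sum_congr rfl fun v _ => h1 v, Finset.sum_comm]
    refine Finset.sum_congr rfl fun w _ => ?_
    by_cases hc : w y = v₀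
    · simp only [if_pos hc, ← Finset.sum_mul, hqsum w, one_mul]
    · simp [if_neg hc]
  have key2 : ∑ w : ∀ i, α i, margProb pt (insert y S) w
      = ∑ w : ∀ i, α i, (if w y = v₀ then margProb pt S w else 0) := by
    rw [sum_split_y y]
    have h1 : ∀ v : α y, ∑ w : ∀ i, α i,
        (if w y = v then margProb pt (insert y S) w else 0)
        = ∑ w : ∀ i, α i, (if w y = v₀ then
            margProb pt (insert y S) (Function.update w y v) else 0) := by
      intro v
      exact fiber_shift y _ v v₀
    rw [Finset.sum_congr rfl fun v _ => h1 v, Finset.sum_comm]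
    refine Finset.sum_congr rfl fun w _ => ?_
    by_cases hc : w y = v₀
    · simp only [if_pos hc]
      exact sum_margProb_update hyS w
    · simp [if_neg hc]
  rw [key1, key2]

lemma sum_margProb_B (hpt : IsDist pt) (B : Finset ι) :
    ∑ w : ∀ i, α i, margProb pt B w = (Kc α B : ℝ) := by
  have h := sum_margProb_mul_local (p := pt) (A := B) (f := fun _ => (1:ℝ))
    (fun w w' _ => rfl)
  simpa [hpt.2] using h

lemma isDist_pert (hpt : IsDist pt) (hptpos : ∀ w, 0 < pt w) (hyS : y ∉ S)
    (hqpos : ∀ w, 0 < q w) (hqB : LocalOn (insert y S) q)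
    (hqsum : ∀ w : ∀ i, α i, ∑ v : α y, q (Function.update w y v) = 1) :
    IsDist (pert y S pt q) := by
  have hGpos : ∀ w, 0 < margProb pt (insert y S) w :=
    fun w => lt_of_lt_of_le (hptpos w) (self_le_margProb hpt.1 _ w)
  have hrnn : ∀ w, 0 ≤ margProb pt S w := fun w => margProb_nonneg hpt.1 S w
  constructor
  · intro w
    unfold pert
    exact div_nonneg (mul_nonneg (le_of_lt (hptpos w))
      (mul_nonneg (le_of_lt (hqpos w)) (hrnn w))) (le_of_lt (hGpos w))
  · have x₀ : ∀ i, α i := Classical.arbitrary _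
    have h1 : ∑ w, pert y S pt q w = margProb (pert y S pt q) ∅ x₀ :=
      (margProb_empty x₀).symm
    rw [h1, margProb_pert pt q hGpos hqB (Finset.empty_subset _) x₀]
    have h2 : Tsum (fun w => q w * margProb pt S w) ∅ x₀
        = ∑ w : ∀ i, α i, q w * margProb pt S w := by
      unfold Tsum
      simp
    rw [h2, sum_QR hyS hqsum, sum_margProb_B hpt]
    exact inv_mul_cancel₀ (ne_of_gt (Kc_pos _))

end Core3
end MBAux6
section MBAux7
set_option linter.unusedSectionVars false

variable {ι : Type*} [Fintype ι] [DecidableEq ι]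
variable {α : ι → Type*} [∀ i, Fintype (α i)] [∀ i, DecidableEq (α i)]
variable [∀ i, Nonempty (α i)]

section Core4

variable {y : ι} {S : Finset ι} {pt q : (∀ i, α i) → ℝ}

lemma condIndep_pert_iff (hpt : IsDist pt) (hptpos : ∀ w, 0 < pt w) (hyS : y ∉ S)
    (hqpos : ∀ w, 0 < q w) (hqB : LocalOn (insert y S) q)
    (hqsum : ∀ w : ∀ i, α i, ∑ v : α y, q (Function.update w y v) = 1)
    {M : Finset ι} (hMS : M ⊆ S) :
    CondIndep (pert y S pt q) {y} (S \ M) M ↔ LocalOn (insert y M) q := by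
  have hGpos : ∀ w, 0 < margProb pt (insert y S) w :=
    fun w => lt_of_lt_of_le (hptpos w) (self_le_margProb hpt.1 _ w)
  have hrpos : ∀ w, 0 < margProb pt S w :=
    fun w => lt_of_lt_of_le (hptpos w) (self_le_margProb hpt.1 _ w)
  have hyM : y ∉ M := fun h => hyS (hMS h)
  have hKpos := Kc_pos (α := α) (insert y S)
  set QR : (∀ i, α i) → ℝ := fun w => q w * margProb pt S w with hQR
  have hQRnn : ∀ w, 0 ≤ QR w :=
    fun w => mul_nonneg (le_of_lt (hqpos w)) (le_of_lt (hrpos w))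
  have hQRpos : ∀ w, 0 < QR w :=
    fun w => mul_pos (hqpos w) (hrpos w)
  have hMsub : M ⊆ insert y S := fun i hi => Finset.mem_insert_of_mem (hMS hi)
  have hiMsub : insert y M ⊆ insert y S := Finset.insert_subset_insert y hMS
  have hSsub : S ⊆ insert y S := Finset.subset_insert y S
  have hMpos : ∀ x, 0 < margProb (pert y S pt q) M x := by
    intro x
    rw [margProb_pert pt q hGpos hqB hMsub x]
    exact mul_pos (inv_pos.2 hKpos) (Tsum_pos hQRnn (hQRpos x))
  constructor
  · -- blanket ⇒ locality
    intro hCI w w' hww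
    have hE : ∀ x : ∀ i, α i, q x * Tsum QR M x = Tsum QR (insert y M) x := by
      intro x
      have h := hCI x (hMpos x)
      rw [union_set1 hMS, union_set2, union_set3 hMS] at h
      rw [margProb_pert pt q hGpos hqB Finset.Subset.rfl x,
        margProb_pert pt q hGpos hqB hMsub x,
        margProb_pert pt q hGpos hqB hiMsub x,
        margProb_pert pt q hGpos hqB hSsub x,
        Tsum_QR_B hqB x, Tsum_QR_S hyS hqB hqsum x] at h
      have hKne : (Kc α (insert y S) : ℝ) ≠ 0 := ne_of_gt hKpos
      have hrne : margProb pt S x ≠ 0 := ne_of_gt (hrpos x)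
      rw [inv_mul_cancel_left₀ hKne] at h
      -- h : q x * r x * (K⁻¹ * TM) = K⁻¹ * TiM * r x
      have h2 := congrArg (fun z => (Kc α (insert y S) : ℝ) * z / margProb pt S x) h
      field_simp at h2
      exact mul_right_cancel₀ hrne (by linear_combination margProb pt S x * h2)
    have hM : ∀ i ∈ M, w i = w' i := fun i hi => hww i (Finset.mem_insert_of_mem hi)
    have hTM : Tsum QR M w = Tsum QR M w' := Tsum_congr M hM
    have hTiM : Tsum QR (insert y M) w = Tsum QR (insert y M) w' :=
      Tsum_congr (insert y M) hww
    have h1 := hE w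
    have h2 := hE w'
    rw [hTM, hTiM] at h1
    rw [← h2] at h1
    exact mul_right_cancel₀ (ne_of_gt (Tsum_pos hQRnn (hQRpos w'))) h1
  · -- locality ⇒ blanket
    intro hqM x _
    rw [union_set1 hMS, union_set2, union_set3 hMS,
      margProb_pert pt q hGpos hqB Finset.Subset.rfl x,
      margProb_pert pt q hGpos hqB hMsub x,
      margProb_pert pt q hGpos hqB hiMsub x,
      margProb_pert pt q hGpos hqB hSsub x,
      Tsum_QR_B hqB x, Tsum_QR_S hyS hqB hqsum x,
      Tsum_QR_M hyM hqM hqsum hyS x, Tsum_QR_iM hqM x]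
    ring

end Core4
end MBAux7
section MBAux8
set_option linter.unusedSectionVars false

variable {ι : Type*} [Fintype ι] [DecidableEq ι]
variable {α : ι → Type*} [∀ i, Fintype (α i)] [∀ i, DecidableEq (α i)]
variable [∀ i, Nonempty (α i)]

variable {y : ι} {S : Finset ι} {pt q : (∀ i, α i) → ℝ}

lemma tv_pert (hpt : IsDist pt) (hptpos : ∀ w, 0 < pt w)
    (hqB : LocalOn (insert y S) q) :
    ∑ w : ∀ i, α i, |pt w - pert y S pt q w|
      = (Kc α (insert y S) : ℝ)⁻¹ *
        ∑ w : ∀ i, α i, |margProb pt (insert y S) w - q w * margProb pt S w| := by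
  have hGpos : ∀ w, 0 < margProb pt (insert y S) w :=
    fun w => lt_of_lt_of_le (hptpos w) (self_le_margProb hpt.1 _ w)
  set g : (∀ i, α i) → ℝ := fun w =>
    |margProb pt (insert y S) w - q w * margProb pt S w| / margProb pt (insert y S) w
    with hg
  have hgloc : LocalOn (insert y S) g := by
    intro w w' h
    have h1 := margProb_localOn pt (insert y S) w w' h
    have h2 := hqB w w' h
    have h3 := margProb_localOn pt S w w'
      (fun i hi => h i (Finset.mem_insert_of_mem hi))
    simp only [hg, h1, h2, h3]
  have hpoint : ∀ w, |pt w - pert y S pt q w| = pt w * g w := by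
    intro w
    have hGne : margProb pt (insert y S) w ≠ 0 := ne_of_gt (hGpos w)
    have e1 : pt w - pert y S pt q w
        = pt w * ((margProb pt (insert y S) w - q w * margProb pt S w)
            / margProb pt (insert y S) w) := by
      unfold pert
      field_simp
    rw [e1, abs_mul, abs_of_nonneg (le_of_lt (hptpos w)), hg]
    rw [abs_div, abs_of_pos (hGpos w)]
  rw [Finset.sum_congr rfl fun w _ => hpoint w]
  have h6 := sum_margProb_mul_local (p := pt) hgloc
  have h7 : ∑ w : ∀ i, α i, margProb pt (insert y S) w * g w
      = ∑ w : ∀ i, α i, |margProb pt (insert y S) w - q w * margProb pt S w| := by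
    refine Finset.sum_congr rfl fun w _ => ?_
    simp only [hg]
    rw [mul_div_assoc']
    rw [mul_comm, mul_div_assoc, div_self (ne_of_gt (hGpos w)), mul_one]
  rw [h7] at h6
  rw [h6, inv_mul_cancel_left₀ (ne_of_gt (Kc_pos (α := α) (insert y S)))]

end MBAux8
section MBAux9
set_option linter.unusedSectionVars false

variable {ι : Type*} [Fintype ι] [DecidableEq ι]
variable {α : ι → Type*} [∀ i, Fintype (α i)] [∀ i, DecidableEq (α i)]
variable [∀ i, Nonempty (α i)]

lemma margProb_insert_singleton {p : (∀ i, α i) → ℝ} {j : ι}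
    (hj : Fintype.card (α j) = 1) (A : Finset ι) (x : ∀ i, α i) :
    margProb p (insert j A) x = margProb p A x := by
  have hsub : Subsingleton (α j) := Fintype.card_le_one_iff_subsingleton.1 (le_of_eq hj)
  refine Finset.sum_congr rfl fun w _ => ?_
  have hiff : (∀ i ∈ insert j A, w i = x i) ↔ (∀ i ∈ A, w i = x i) := by
    rw [Finset.forall_mem_insert]
    exact ⟨fun h => h.2, fun h => ⟨Subsingleton.elim _ _, h⟩⟩
  exact if_congr hiff rfl rfl

variable {p : (∀ i, α i) → ℝ} {y : ι} {S M₀ : Finset ι}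

lemma bd_card_y (hp : IsDist p) (hyS : y ∉ S) (hM₀ : MarkovBoundary p y S M₀)
    (hk : Fintype.card (α y) = 1) : M₀ = ∅ := by
  by_contra hne
  refine hM₀.2 ∅ (Finset.empty_ssubset.2 (Finset.nonempty_iff_ne_empty.2 hne)) ?_
  refine ⟨Finset.empty_subset S, fun x _ => ?_⟩
  rw [Finset.sdiff_empty, Finset.union_empty, Finset.union_empty, Finset.union_empty]
  have h1 : ({y} : Finset ι) ∪ S = insert y S := union_set2
  have h2 : ({y} : Finset ι) = insert y (∅ : Finset ι) := by simp
  rw [h1, h2, margProb_insert_singleton hk, margProb_insert_singleton hk]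
  ring

lemma bd_card_mem (hp : IsDist p) (hyS : y ∉ S) (hM₀ : MarkovBoundary p y S M₀)
    {i : ι} (hi : i ∈ M₀) (hk : Fintype.card (α i) = 1) : False := by
  have hM0S : M₀ ⊆ S := hM₀.1.1
  have heS : M₀.erase i ⊆ S := (Finset.erase_subset i M₀).trans hM0S
  refine hM₀.2 (M₀.erase i) (Finset.erase_ssubset hi) ⟨heS, fun x hpos => ?_⟩
  have hrec : insert i (M₀.erase i) = M₀ := Finset.insert_erase hi
  have e1 : margProb p (M₀.erase i) x = margProb p M₀ x := by
    conv_rhs => rw [← hrec]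
    rw [margProb_insert_singleton hk]
  have e2 : margProb p ({y} ∪ M₀.erase i) x = margProb p ({y} ∪ M₀) x := by
    rw [union_set2, union_set2]
    conv_rhs => rw [← hrec, Finset.insert_comm]
    rw [margProb_insert_singleton hk]
  rw [union_set1 heS, union_set3 heS, e1, e2]
  have hpos' : 0 < margProb p M₀ x := by rwa [e1] at hpos
  have h := hM₀.1.2 x hpos'
  rw [union_set1 hM0S, union_set3 hM0S] at h
  exact h

lemma fact_F3 (hp : IsDist p) (hyS : y ∉ S) (hM₀ : MarkovBoundary p y S M₀)
    (x : ∀ i, α i) :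
    margProb p (insert y S) x * margProb p M₀ x
      = margProb p (insert y M₀) x * margProb p S x := by
  have hM0S : M₀ ⊆ S := hM₀.1.1
  by_cases hpos : 0 < margProb p M₀ x
  · have h := hM₀.1.2 x hpos
    rw [union_set1 hM0S, union_set2, union_set3 hM0S] at h
    exact h
  · have h0 : margProb p M₀ x = 0 :=
      le_antisymm (not_lt.1 hpos) (margProb_nonneg hp.1 M₀ x)
    have hBsub : M₀ ⊆ insert y S := hM0S.trans (Finset.subset_insert y S)
    have hB0 : margProb p (insert y S) x = 0 :=
      le_antisymm (h0 ▸ margProb_mono hp.1 hBsub x)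
        (margProb_nonneg hp.1 _ x)
    have hS0 : margProb p S x = 0 :=
      le_antisymm (h0 ▸ margProb_mono hp.1 hM0S x)
        (margProb_nonneg hp.1 _ x)
    rw [hB0, hS0]
    ring

end MBAux9
section MBAux10
set_option linter.unusedSectionVars false

variable {ι : Type*} [Fintype ι] [DecidableEq ι]
variable {α : ι → Type*} [∀ i, Fintype (α i)] [∀ i, DecidableEq (α i)]
variable [∀ i, Nonempty (α i)]

/-- count of default-matching coordinates in `M₀`. -/
def tcount (M₀ : Finset ι) (d : ∀ i, α i) (w : ∀ i, α i) : ℝ :=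
  ∑ i ∈ M₀, (if w i = d i then (1:ℝ) else 0)

lemma tcount_nonneg (M₀ : Finset ι) (d w : ∀ i, α i) : 0 ≤ tcount M₀ d w := by
  refine Finset.sum_nonneg fun i _ => ?_
  split <;> norm_num

lemma tcount_local (M₀ : Finset ι) (d : ∀ i, α i) : LocalOn M₀ (tcount M₀ d) := by
  intro w w' h
  refine Finset.sum_congr rfl fun i hi => ?_
  rw [h i hi]

/-- the "generic" part of the conditional for `y` given `M₀`. -/
def apart (y : ι) (y₀ : α y) (M₀ : Finset ι) (d : ∀ i, α i) (w : ∀ i, α i) : ℝ :=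
  if 2 ≤ Fintype.card (α y) then
    (if w y = y₀ then 1/(2 + tcount M₀ d w)
     else (1 - 1/(2 + tcount M₀ d w))/((Fintype.card (α y) : ℝ) - 1))
  else 1

lemma a_pos (M₀ : Finset ι) (d w : ∀ i, α i) : 0 < 1/(2 + tcount M₀ d w) := by
  have := tcount_nonneg M₀ d w
  positivity

lemma a_le_half (M₀ : Finset ι) (d w : ∀ i, α i) : 1/(2 + tcount M₀ d w) ≤ 1/2 := by
  have h := tcount_nonneg M₀ d w
  rw [div_le_div_iff₀ (by linarith) (by norm_num)]
  linarith

lemma apart_pos (y : ι) (y₀ : α y) (M₀ : Finset ι) (d : ∀ i, α i) (w : ∀ i, α i) :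
    0 < apart y y₀ M₀ d w := by
  unfold apart
  split
  · rename_i hk
    have h1 := a_pos M₀ d w
    have h2 := a_le_half M₀ d w
    have hk1 : (1:ℝ) ≤ (Fintype.card (α y) : ℝ) - 1 := by
      have : (2:ℝ) ≤ (Fintype.card (α y) : ℝ) := by exact_mod_cast ‹2 ≤ Fintype.card (α y)›
      linarith
    split
    · exact h1
    · apply div_pos (by linarith) (by linarith)
  · norm_num

lemma apart_le_one (y : ι) (y₀ : α y) (M₀ : Finset ι) (d : ∀ i, α i) (w : ∀ i, α i) :
    apart y y₀ M₀ d w ≤ 1 := by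
  unfold apart
  split
  · rename_i hk
    have h1 := a_pos M₀ d w
    have h2 := a_le_half M₀ d w
    have hk1 : (1:ℝ) ≤ (Fintype.card (α y) : ℝ) - 1 := by
      have : (2:ℝ) ≤ (Fintype.card (α y) : ℝ) := by exact_mod_cast ‹2 ≤ Fintype.card (α y)›
      linarith
    split
    · linarith
    · rw [div_le_one (by linarith)]
      linarith
  · norm_num

lemma apart_local (y : ι) (y₀ : α y) {M₀ : Finset ι} (d : ∀ i, α i)
    (hyM : y ∉ M₀) : LocalOn (insert y M₀) (apart y y₀ M₀ d) := by
  intro w w' h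
  unfold apart
  have ht : tcount M₀ d w = tcount M₀ d w' :=
    tcount_local M₀ d w w' fun i hi => h i (Finset.mem_insert_of_mem hi)
  have hy : w y = w' y := h y (Finset.mem_insert_self y M₀)
  rw [ht, hy]

lemma apart_sum (y : ι) (y₀ : α y) {M₀ : Finset ι} (d : ∀ i, α i)
    (hyM : y ∉ M₀) (w : ∀ i, α i) :
    ∑ v : α y, apart y y₀ M₀ d (Function.update w y v) = 1 := by
  have ht : ∀ v : α y, tcount M₀ d (Function.update w y v) = tcount M₀ d w := by
    intro v
    refine tcount_local M₀ d _ _ fun i hi => ?_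
    have hne : i ≠ y := fun hh => hyM (hh ▸ hi)
    exact Function.update_of_ne hne v w
  by_cases hk : 2 ≤ Fintype.card (α y)
  · have hstep : ∀ v : α y, apart y y₀ M₀ d (Function.update w y v)
        = (if v = y₀ then 1/(2 + tcount M₀ d w)
           else (1 - 1/(2 + tcount M₀ d w))/((Fintype.card (α y) : ℝ) - 1)) := by
      intro v
      unfold apart
      rw [if_pos hk, ht v, Function.update_self]
    rw [Finset.sum_congr rfl fun v _ => hstep v]
    rw [← Finset.add_sum_erase _ _ (Finset.mem_univ y₀), if_pos rfl]
    have hB : ∀ v ∈ Finset.univ.erase y₀,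
        (if v = y₀ then 1/(2 + tcount M₀ d w)
           else (1 - 1/(2 + tcount M₀ d w))/((Fintype.card (α y) : ℝ) - 1))
        = (1 - 1/(2 + tcount M₀ d w))/((Fintype.card (α y) : ℝ) - 1) := by
      intro v hv
      rw [if_neg (Finset.ne_of_mem_erase hv)]
    rw [Finset.sum_congr rfl hB, Finset.sum_const,
      Finset.card_erase_of_mem (Finset.mem_univ y₀), Finset.card_univ, nsmul_eq_mul]
    have hk1 : (1:ℕ) ≤ Fintype.card (α y) := Fintype.card_pos
    have hcast : ((Fintype.card (α y) - 1 : ℕ) : ℝ) = (Fintype.card (α y) : ℝ) - 1 := by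
      rw [Nat.cast_sub hk1]
      norm_num
    have hne : (Fintype.card (α y) : ℝ) - 1 ≠ 0 := by
      have : (2:ℝ) ≤ (Fintype.card (α y) : ℝ) := by exact_mod_cast hk
      linarith
    rw [hcast, mul_div_cancel₀ _ hne]
    ring
  · have hk1 : Fintype.card (α y) = 1 := by
      have := Fintype.card_pos (α := α y)
      omega
    have hstep : ∀ v : α y, apart y y₀ M₀ d (Function.update w y v) = 1 := by
      intro v
      unfold apart
      rw [if_neg hk]
    rw [Finset.sum_congr rfl fun v _ => hstep v, Finset.sum_const, Finset.card_univ, hk1]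
    norm_num

end MBAux10
section MBAux11
set_option linter.unusedSectionVars false

variable {ι : Type*} [Fintype ι] [DecidableEq ι]
variable {α : ι → Type*} [∀ i, Fintype (α i)] [∀ i, DecidableEq (α i)]
variable [∀ i, Nonempty (α i)]

/-- conditional of `y` given `M₀` under `pt`. -/
def kappa (pt : (∀ i, α i) → ℝ) (y : ι) (M₀ : Finset ι) (w : ∀ i, α i) : ℝ :=
  margProb pt (insert y M₀) w / margProb pt M₀ w

variable {pt : (∀ i, α i) → ℝ} {y : ι} {M₀ : Finset ι}

lemma kappa_pos (hpt : IsDist pt) (hptpos : ∀ w, 0 < pt w) (w : ∀ i, α i) :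
    0 < kappa pt y M₀ w :=
  div_pos (lt_of_lt_of_le (hptpos w) (self_le_margProb hpt.1 _ w))
    (lt_of_lt_of_le (hptpos w) (self_le_margProb hpt.1 _ w))

lemma kappa_le_one (hpt : IsDist pt) (hptpos : ∀ w, 0 < pt w) (w : ∀ i, α i) :
    kappa pt y M₀ w ≤ 1 := by
  unfold kappa
  rw [div_le_one (lt_of_lt_of_le (hptpos w) (self_le_margProb hpt.1 _ w))]
  exact margProb_mono hpt.1 (Finset.subset_insert y M₀) w

lemma kappa_local : LocalOn (insert y M₀) (kappa pt y M₀) := by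
  intro w w' h
  unfold kappa
  rw [margProb_localOn pt (insert y M₀) w w' h,
    margProb_localOn pt M₀ w w' fun i hi => h i (Finset.mem_insert_of_mem hi)]

lemma kappa_sum (hpt : IsDist pt) (hptpos : ∀ w, 0 < pt w) (hyM : y ∉ M₀)
    (w : ∀ i, α i) : ∑ v : α y, kappa pt y M₀ (Function.update w y v) = 1 := by
  have hden : ∀ v : α y, margProb pt M₀ (Function.update w y v) = margProb pt M₀ w := by
    intro v
    refine margProb_localOn pt M₀ _ _ fun i hi => ?_
    have hne : i ≠ y := fun hh => hyM (hh ▸ hi)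
    exact Function.update_of_ne hne v w
  have hstep : ∀ v : α y, kappa pt y M₀ (Function.update w y v)
      = margProb pt (insert y M₀) (Function.update w y v) / margProb pt M₀ w := by
    intro v
    unfold kappa
    rw [hden v]
  rw [Finset.sum_congr rfl fun v _ => hstep v, ← Finset.sum_div,
    sum_margProb_update hyM w]
  exact div_self (ne_of_gt (lt_of_lt_of_le (hptpos w) (self_le_margProb hpt.1 _ w)))

/-- the perturbed conditional. -/
def qfun (pt : (∀ i, α i) → ℝ) (y : ι) (y₀ : α y) (M₀ : Finset ι) (d : ∀ i, α i)
    (η : ℝ) (w : ∀ i, α i) : ℝ :=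
  (1 - η) * kappa pt y M₀ w + η * apart y y₀ M₀ d w

variable {y₀ : α y} {d : ∀ i, α i} {η : ℝ}

lemma qfun_pos (hpt : IsDist pt) (hptpos : ∀ w, 0 < pt w) (hη0 : 0 < η)
    (hη1 : η ≤ 1) (w : ∀ i, α i) : 0 < qfun pt y y₀ M₀ d η w := by
  have h1 := kappa_pos (y := y) (M₀ := M₀) hpt hptpos w
  have h2 := apart_pos y y₀ M₀ d w
  have : 0 ≤ (1 - η) * kappa pt y M₀ w := mul_nonneg (by linarith) (le_of_lt h1)
  have : 0 < η * apart y y₀ M₀ d w := mul_pos hη0 h2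
  unfold qfun
  linarith

lemma qfun_local (hyM : y ∉ M₀) : LocalOn (insert y M₀) (qfun pt y y₀ M₀ d η) := by
  intro w w' h
  unfold qfun
  rw [kappa_local w w' h, apart_local y y₀ d hyM w w' h]

lemma qfun_sum (hpt : IsDist pt) (hptpos : ∀ w, 0 < pt w) (hyM : y ∉ M₀)
    (w : ∀ i, α i) : ∑ v : α y, qfun pt y y₀ M₀ d η (Function.update w y v) = 1 := by
  unfold qfun
  rw [Finset.sum_add_distrib, ← Finset.mul_sum, ← Finset.mul_sum,
    kappa_sum hpt hptpos hyM w, apart_sum y y₀ d hyM w]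
  ring

lemma margProb_combo (p u : (∀ i, α i) → ℝ) (c1 c2 : ℝ) (A : Finset ι) (x : ∀ i, α i) :
    margProb (fun w => c1 * p w + c2 * u w) A x
      = c1 * margProb p A x + c2 * margProb u A x := by
  unfold margProb
  rw [Finset.mul_sum, Finset.mul_sum, ← Finset.sum_add_distrib]
  refine Finset.sum_congr rfl fun w _ => ?_
  split <;> simp

end MBAux11
section MBAux12
set_option linter.unusedSectionVars false

variable {ι : Type*} [Fintype ι] [DecidableEq ι]
variable {α : ι → Type*} [∀ i, Fintype (α i)] [∀ i, DecidableEq (α i)]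
variable [∀ i, Nonempty (α i)]

/-- mixture of `p` with the uniform distribution. -/
def mixu (p : (∀ i, α i) → ℝ) (ε : ℝ) : (∀ i, α i) → ℝ :=
  fun w => (1 - ε) * p w + ε * (Fintype.card (∀ i, α i) : ℝ)⁻¹

def unifd (α : ι → Type*) [∀ i, Fintype (α i)] : (∀ i, α i) → ℝ :=
  fun _ => (Fintype.card (∀ i, α i) : ℝ)⁻¹

lemma card_pi_pos : 0 < (Fintype.card (∀ i, α i) : ℝ) := by
  have : 0 < Fintype.card (∀ i, α i) := Fintype.card_pos
  exact_mod_cast this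

lemma isDist_unifd : IsDist (unifd α) := by
  constructor
  · intro w
    exact le_of_lt (inv_pos.2 card_pi_pos)
  · unfold unifd
    rw [Finset.sum_const, Finset.card_univ, nsmul_eq_mul]
    exact mul_inv_cancel₀ (ne_of_gt card_pi_pos)

lemma isDist_mixu {p : (∀ i, α i) → ℝ} (hp : IsDist p) {ε : ℝ} (hε0 : 0 ≤ ε)
    (hε1 : ε ≤ 1) : IsDist (mixu p ε) := by
  constructor
  · intro w
    have h1 := hp.1 w
    have h2 := le_of_lt (inv_pos.2 (card_pi_pos (α := α)))
    have : 0 ≤ (1 - ε) * p w := mul_nonneg (by linarith) h1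
    have : 0 ≤ ε * (Fintype.card (∀ i, α i) : ℝ)⁻¹ := mul_nonneg hε0 h2
    unfold mixu
    linarith
  · unfold mixu
    rw [Finset.sum_add_distrib, ← Finset.mul_sum, ← Finset.mul_sum, hp.2]
    rw [Finset.sum_const, Finset.card_univ, nsmul_eq_mul,
      mul_inv_cancel₀ (ne_of_gt (card_pi_pos (α := α)))]
    ring

lemma mixu_pos {p : (∀ i, α i) → ℝ} (hp : IsDist p) {ε : ℝ} (hε0 : 0 < ε)
    (hε1 : ε ≤ 1) (w : ∀ i, α i) : 0 < mixu p ε w := by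
  have h1 := hp.1 w
  have h2 := inv_pos.2 (card_pi_pos (α := α))
  have h3 : 0 ≤ (1 - ε) * p w := mul_nonneg (by linarith) h1
  have h4 : 0 < ε * (Fintype.card (∀ i, α i) : ℝ)⁻¹ := mul_pos hε0 h2
  unfold mixu
  linarith

lemma margProb_mixu (p : (∀ i, α i) → ℝ) (ε : ℝ) (A : Finset ι) (x : ∀ i, α i) :
    margProb (mixu p ε) A x
      = (1 - ε) * margProb p A x + ε * margProb (unifd α) A x :=
  margProb_combo p (unifd α) (1 - ε) ε A x

lemma pointwise_bound {p : (∀ i, α i) → ℝ} (hp : IsDist p) {y : ι} {S M₀ : Finset ι}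
    (hyS : y ∉ S) (hM0S : M₀ ⊆ S)
    (hF3 : ∀ x, margProb p (insert y S) x * margProb p M₀ x
      = margProb p (insert y M₀) x * margProb p S x)
    {ε η : ℝ} (hε0 : 0 < ε) (hε1 : ε ≤ 1) (hη0 : 0 ≤ η) (hη1 : η ≤ 1)
    (y₀ : α y) (d : ∀ i, α i) (w : ∀ i, α i) :
    |margProb (mixu p ε) (insert y S) w
        - qfun (mixu p ε) y y₀ M₀ d η w * margProb (mixu p ε) S w|
      ≤ 2 * Real.sqrt (3 * ε) + 2 * η := by
  set pt := mixu p ε with hpt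
  have hptD : IsDist pt := isDist_mixu hp (le_of_lt hε0) hε1
  have hptpos : ∀ v, 0 < pt v := mixu_pos hp hε0 hε1
  have huD : IsDist (unifd α) := isDist_unifd
  set s := Real.sqrt (3 * ε) with hs
  have hs0 : 0 < s := Real.sqrt_pos.2 (by linarith)
  have hss : s * s = 3 * ε := Real.mul_self_sqrt (by linarith)
  set tG := margProb pt (insert y S) w
  set tm := margProb pt M₀ w
  set tg := margProb pt (insert y M₀) w
  set tr := margProb pt S w
  have htm0 : 0 < tm := lt_of_lt_of_le (hptpos w) (self_le_margProb hptD.1 _ w)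
  have htG0 : 0 ≤ tG := margProb_nonneg hptD.1 _ w
  have htg0 : 0 ≤ tg := margProb_nonneg hptD.1 _ w
  have htr0 : 0 ≤ tr := margProb_nonneg hptD.1 _ w
  have htG1 : tG ≤ 1 := margProb_le_one hptD _ w
  have htr1 : tr ≤ 1 := margProb_le_one hptD _ w
  have hGm : tG ≤ tm := margProb_mono hptD.1 (hM0S.trans (Finset.subset_insert y S)) w
  have hgm : tg ≤ tm := margProb_mono hptD.1 (Finset.subset_insert y M₀) w
  have hrm : tr ≤ tm := margProb_mono hptD.1 hM0S w
  -- quadratic estimate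
  have hquad : |tG * tm - tg * tr| ≤ 3 * ε := by
    set aG := margProb p (insert y S) w
    set am := margProb p M₀ w
    set ag := margProb p (insert y M₀) w
    set ar := margProb p S w
    set uG := margProb (unifd α) (insert y S) w
    set um := margProb (unifd α) M₀ w
    set ug := margProb (unifd α) (insert y M₀) w
    set ur := margProb (unifd α) S w
    have haG : 0 ≤ aG ∧ aG ≤ 1 := ⟨margProb_nonneg hp.1 _ w, margProb_le_one hp _ w⟩
    have ham : 0 ≤ am ∧ am ≤ 1 := ⟨margProb_nonneg hp.1 _ w, margProb_le_one hp _ w⟩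
    have hag : 0 ≤ ag ∧ ag ≤ 1 := ⟨margProb_nonneg hp.1 _ w, margProb_le_one hp _ w⟩
    have har : 0 ≤ ar ∧ ar ≤ 1 := ⟨margProb_nonneg hp.1 _ w, margProb_le_one hp _ w⟩
    have huG : 0 ≤ uG ∧ uG ≤ 1 := ⟨margProb_nonneg huD.1 _ w, margProb_le_one huD _ w⟩
    have hum : 0 ≤ um ∧ um ≤ 1 := ⟨margProb_nonneg huD.1 _ w, margProb_le_one huD _ w⟩
    have hug : 0 ≤ ug ∧ ug ≤ 1 := ⟨margProb_nonneg huD.1 _ w, margProb_le_one huD _ w⟩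
    have hur : 0 ≤ ur ∧ ur ≤ 1 := ⟨margProb_nonneg huD.1 _ w, margProb_le_one huD _ w⟩
    have hexp : tG * tm - tg * tr
        = ε * ((1 - ε) * (aG * um + uG * am - ag * ur - ug * ar)
            + ε * (uG * um - ug * ur)) := by
      have e1 : tG = (1 - ε) * aG + ε * uG := margProb_mixu p ε _ w
      have e2 : tm = (1 - ε) * am + ε * um := margProb_mixu p ε _ w
      have e3 : tg = (1 - ε) * ag + ε * ug := margProb_mixu p ε _ w
      have e4 : tr = (1 - ε) * ar + ε * ur := margProb_mixu p ε _ w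
      rw [e1, e2, e3, e4]
      linear_combination ((1 - ε) * (1 - ε)) * hF3 w
    rw [hexp, abs_mul, abs_of_pos hε0]
    set A2 := aG * um + uG * am - ag * ur - ug * ar with hA2def
    set A3 := uG * um - ug * ur with hA3def
    have p1 : 0 ≤ aG * um ∧ aG * um ≤ 1 :=
      ⟨mul_nonneg haG.1 hum.1, mul_le_one₀ haG.2 hum.1 hum.2⟩
    have p2 : 0 ≤ uG * am ∧ uG * am ≤ 1 :=
      ⟨mul_nonneg huG.1 ham.1, mul_le_one₀ huG.2 ham.1 ham.2⟩
    have p3 : 0 ≤ ag * ur ∧ ag * ur ≤ 1 :=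
      ⟨mul_nonneg hag.1 hur.1, mul_le_one₀ hag.2 hur.1 hur.2⟩
    have p4 : 0 ≤ ug * ar ∧ ug * ar ≤ 1 :=
      ⟨mul_nonneg hug.1 har.1, mul_le_one₀ hug.2 har.1 har.2⟩
    have p5 : 0 ≤ uG * um ∧ uG * um ≤ 1 :=
      ⟨mul_nonneg huG.1 hum.1, mul_le_one₀ huG.2 hum.1 hum.2⟩
    have p6 : 0 ≤ ug * ur ∧ ug * ur ≤ 1 :=
      ⟨mul_nonneg hug.1 hur.1, mul_le_one₀ hug.2 hur.1 hur.2⟩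
    have hA2 : |A2| ≤ 2 := by
      rw [abs_le]
      constructor <;> [linarith [p1.1, p2.1, p3.2, p4.2]; linarith [p1.2, p2.2, p3.1, p4.1]]
    have hA3 : |A3| ≤ 1 := by
      rw [abs_le]
      constructor <;> [linarith [p5.1, p6.2]; linarith [p5.2, p6.1]]
    have hinner : |(1 - ε) * A2 + ε * A3| ≤ 3 := by
      calc |(1 - ε) * A2 + ε * A3| ≤ |(1 - ε) * A2| + |ε * A3| := abs_add_le _ _
        _ = (1 - ε) * |A2| + ε * |A3| := by
            rw [abs_mul, abs_mul, abs_of_nonneg (by linarith : (0:ℝ) ≤ 1 - ε),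
              abs_of_pos hε0]
        _ ≤ (1 - ε) * 2 + ε * 1 := by
            have h1 := mul_le_mul_of_nonneg_left hA2 (by linarith : (0:ℝ) ≤ 1 - ε)
            have h2 := mul_le_mul_of_nonneg_left hA3 (le_of_lt hε0)
            linarith
        _ ≤ 3 := by linarith
    calc ε * |(1 - ε) * A2 + ε * A3| ≤ ε * 3 :=
          mul_le_mul_of_nonneg_left hinner (le_of_lt hε0)
      _ = 3 * ε := by ring
  -- step 1 : |tG - kappa * tr| ≤ 2 s
  have hk1 : |tG - kappa pt y M₀ w * tr| ≤ 2 * s := by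
    have hkv : kappa pt y M₀ w = tg / tm := rfl
    by_cases hcase : tm ≤ s
    · have hkle : kappa pt y M₀ w ≤ 1 := kappa_le_one hptD hptpos w
      have hk0 : 0 < kappa pt y M₀ w := kappa_pos hptD hptpos w
      have h1 : kappa pt y M₀ w * tr ≤ tr := by nlinarith
      have h2 : 0 ≤ kappa pt y M₀ w * tr := mul_nonneg (le_of_lt hk0) htr0
      rw [abs_le]
      constructor <;> nlinarith
    · push_neg at hcase
      have htmne : tm ≠ 0 := ne_of_gt htm0
      have heq : tG - tg / tm * tr = (tG * tm - tg * tr) / tm := by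
        field_simp
      rw [hkv, heq, abs_div, abs_of_pos htm0]
      have h2 : |tG * tm - tg * tr| / tm ≤ 3 * ε / tm := by gcongr
      have h3 : 3 * ε / tm ≤ 3 * ε / s := by
        gcongr
      have h4 : 3 * ε / s = s := by
        rw [← hss, mul_div_assoc, div_self (ne_of_gt hs0), mul_one]
      linarith
  -- step 2
  have hap0 : 0 < apart y y₀ M₀ d w := apart_pos y y₀ M₀ d w
  have hap1 : apart y y₀ M₀ d w ≤ 1 := apart_le_one y y₀ M₀ d w
  have hap2 : |tG - apart y y₀ M₀ d w * tr| ≤ 2 := by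
    have h1 : 0 ≤ apart y y₀ M₀ d w * tr := mul_nonneg (le_of_lt hap0) htr0
    have h2 : apart y y₀ M₀ d w * tr ≤ 1 := mul_le_one₀ hap1 htr0 htr1
    rw [abs_le]
    constructor <;> linarith
  have hsplit : tG - qfun pt y y₀ M₀ d η w * tr
      = (1 - η) * (tG - kappa pt y M₀ w * tr)
        + η * (tG - apart y y₀ M₀ d w * tr) := by
    unfold qfun
    ring
  rw [hsplit]
  calc |(1 - η) * (tG - kappa pt y M₀ w * tr) + η * (tG - apart y y₀ M₀ d w * tr)|
      ≤ |(1 - η) * (tG - kappa pt y M₀ w * tr)| + |η * (tG - apart y y₀ M₀ d w * tr)| :=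
        abs_add_le _ _
    _ ≤ (1 - η) * (2 * s) + η * 2 := by
        rw [abs_mul, abs_mul, abs_of_nonneg (by linarith : (0:ℝ) ≤ 1 - η),
          abs_of_nonneg hη0]
        have := mul_le_mul_of_nonneg_left hk1 (by linarith : (0:ℝ) ≤ 1 - η)
        have := mul_le_mul_of_nonneg_left hap2 hη0
        linarith
    _ ≤ 2 * s + 2 * η := by nlinarith

end MBAux12
section MBAux13
set_option linter.unusedSectionVars false

variable {ι : Type*} [Fintype ι] [DecidableEq ι]
variable {α : ι → Type*} [∀ i, Fintype (α i)] [∀ i, DecidableEq (α i)]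
variable [∀ i, Nonempty (α i)]

lemma tcount_flip {y : ι} {M₀ : Finset ι} (hyM : y ∉ M₀) {i : ι} (hi : i ∈ M₀)
    (y₀ : α y) (d : ∀ i, α i) {ei : α i} (hei : ei ≠ d i) :
    tcount M₀ d (Function.update d y y₀)
      = tcount M₀ d (Function.update (Function.update d y y₀) i ei) + 1 := by
  have hiy : i ≠ y := fun h => hyM (h ▸ hi)
  unfold tcount
  rw [← Finset.add_sum_erase _ _ hi, ← Finset.add_sum_erase _ _ hi]
  have e1 : Function.update d y y₀ i = d i := Function.update_of_ne hiy y₀ d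
  have e2 : Function.update (Function.update d y y₀) i ei i = ei :=
    Function.update_self i ei _
  rw [if_pos e1, e2, if_neg hei]
  have e3 : ∀ j ∈ M₀.erase i,
      (if Function.update (Function.update d y y₀) i ei j = d j then (1:ℝ) else 0)
        = (if Function.update d y y₀ j = d j then (1:ℝ) else 0) := by
    intro j hj
    rw [Function.update_of_ne (Finset.ne_of_mem_erase hj) ei _]
  rw [Finset.sum_congr rfl e3]
  ring

lemma apart_flip_ne {y : ι} {M₀ : Finset ι} (hyM : y ∉ M₀) {i : ι} (hi : i ∈ M₀)
    (hk : 2 ≤ Fintype.card (α y)) (y₀ : α y) (d : ∀ i, α i) {ei : α i}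
    (hei : ei ≠ d i) :
    apart y y₀ M₀ d (Function.update d y y₀)
      ≠ apart y y₀ M₀ d (Function.update (Function.update d y y₀) i ei) := by
  have hiy : i ≠ y := fun h => hyM (h ▸ hi)
  set x₁ := Function.update d y y₀ with hx1
  set x₂ := Function.update x₁ i ei with hx2
  have hy1 : x₁ y = y₀ := Function.update_self y y₀ d
  have hy2 : x₂ y = y₀ := by
    rw [hx2, Function.update_of_ne (Ne.symm hiy) ei x₁, hy1]
  have ht := tcount_flip hyM hi y₀ d hei
  unfold apart
  rw [if_pos hk, if_pos hk, hy1, hy2, if_pos rfl, if_pos rfl]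
  set t2 := tcount M₀ d x₂ with ht2
  have ht2nn : 0 ≤ t2 := tcount_nonneg M₀ d x₂
  rw [ht]
  intro h
  rw [div_eq_div_iff (by linarith) (by linarith)] at h
  linarith

lemma eta_good {Δκ Δa η : ℝ} (hΔa : Δa ≠ 0)
    (hbad : η ≠ (if Δκ = Δa then 0 else Δκ / (Δκ - Δa))) :
    (1 - η) * Δκ + η * Δa ≠ 0 := by
  intro h
  by_cases hc : Δκ = Δa
  · rw [hc] at h
    exact hΔa (by linarith)
  · apply hbad
    rw [if_neg hc, eq_div_iff (sub_ne_zero.2 hc)]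
    linear_combination -h

lemma exists_eta {ε : ℝ} (hε : 0 < ε) (Bad : Finset ℝ) :
    ∃ η : ℝ, 0 < η ∧ η ≤ ε ∧ η ∉ Bad := by
  by_contra hcon
  push_neg at hcon
  set f : ℕ → ℝ := fun j => ε / (j + 1) with hf
  have hfpos : ∀ j : ℕ, 0 < f j := by
    intro j
    apply div_pos hε
    positivity
  have hfle : ∀ j : ℕ, f j ≤ ε := by
    intro j
    rw [hf]
    rw [div_le_iff₀ (by positivity : (0:ℝ) < (j:ℝ) + 1)]
    nlinarith [Nat.cast_nonneg (α := ℝ) j]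
  have hinj : Function.Injective f := by
    intro a b hab
    simp only [hf] at hab
    rw [div_eq_div_iff (by positivity) (by positivity)] at hab
    have : ((b:ℝ) + 1) = ((a:ℝ) + 1) := mul_left_cancel₀ (ne_of_gt hε) hab
    have : (b:ℝ) = (a:ℝ) := by linarith
    exact_mod_cast this.symm
  have hsub : (Finset.range (Bad.card + 1)).image f ⊆ Bad := by
    intro z hz
    rw [Finset.mem_image] at hz
    obtain ⟨j, _, rfl⟩ := hz
    exact hcon (f j) (hfpos j) (hfle j)
  have hcard := Finset.card_le_card hsub
  rw [Finset.card_image_of_injective _ hinj, Finset.card_range] at hcard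
  omega

end MBAux13

/-- if `Y` has multiple Markov boundaries within `S` under `P` and `M₀`
is one of them, then arbitrarily close to `P` in total variation there is a distribution
`P'` under which `M₀` is the unique Markov boundary of `Y` within `S`. -/
theorem perturbation_to_unique_markov_boundary
    (p : (∀ i, α i) → ℝ) (hp : IsDist p)
    (y : ι) (S : Finset ι) (hyS : y ∉ S)
    (hmulti : ∃ M₁ M₂, MarkovBoundary p y S M₁ ∧ MarkovBoundary p y S M₂ ∧ M₁ ≠ M₂)
    (M₀ : Finset ι) (hM₀ : MarkovBoundary p y S M₀) :
    ∀ δ : ℝ, 0 < δ → ∃ p' : (∀ i, α i) → ℝ, IsDist p' ∧ tvDist p p' < δ ∧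
      MarkovBoundary p' y S M₀ ∧ ∀ M, MarkovBoundary p' y S M → M = M₀ := by
  classical
  intro δ hδ
  have hM0S : M₀ ⊆ S := hM₀.1.1
  have hyM0 : y ∉ M₀ := fun h => hyS (hM0S h)
  have hF3 : ∀ x, margProb p (insert y S) x * margProb p M₀ x
      = margProb p (insert y M₀) x * margProb p S x := fun x => fact_F3 hp hyS hM₀ x
  set N : ℝ := (Fintype.card (∀ i, α i) : ℝ) with hN
  have hN1 : 1 ≤ N := by
    have h : 1 ≤ Fintype.card (∀ i, α i) := Fintype.card_pos
    rw [hN]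
    exact_mod_cast h
  -- choice of ε
  set τ : ℝ := min (1/2) (δ / (2 + 6 * N)) with hτdef
  have hτ0 : 0 < τ := lt_min (by norm_num) (div_pos hδ (by linarith))
  have hτhalf : τ ≤ 1/2 := min_le_left _ _
  have hτδ : τ ≤ δ / (2 + 6 * N) := min_le_right _ _
  set ε : ℝ := τ ^ 2 with hεdef
  have hε0 : 0 < ε := by positivity
  have hετ : ε ≤ τ / 2 := by nlinarith
  have hε1 : ε ≤ 1 := by nlinarith
  set pt : (∀ i, α i) → ℝ := mixu p ε with hptdef
  have hptD : IsDist pt := isDist_mixu hp (le_of_lt hε0) hε1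
  have hptpos : ∀ w, 0 < pt w := mixu_pos hp hε0 hε1
  -- defaults and flips
  set y₀ : α y := Classical.arbitrary _ with hy₀
  set d : ∀ i, α i := fun i => Classical.arbitrary _ with hd
  have hcard2 : ∀ i ∈ M₀, 2 ≤ Fintype.card (α i) := by
    intro i hi
    by_contra hlt
    push_neg at hlt
    have h1 : 0 < Fintype.card (α i) := Fintype.card_pos
    exact bd_card_mem hp hyS hM₀ hi (by omega)
  set eF : ∀ i, α i := fun i =>
    if h : ∃ b : α i, b ≠ d i then Classical.choose h else d i with heFdef
  have heF : ∀ i ∈ M₀, eF i ≠ d i := by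
    intro i hi
    have hex : ∃ b : α i, b ≠ d i :=
      Fintype.exists_ne_of_one_lt_card (by have := hcard2 i hi; omega) (d i)
    simp only [heFdef, dif_pos hex]
    exact Classical.choose_spec hex
  set x₁ : ∀ i, α i := Function.update d y y₀ with hx₁
  set x₂ : ι → ∀ i, α i := fun i => Function.update x₁ i (eF i) with hx₂
  set Δκ : ι → ℝ := fun i => kappa pt y M₀ x₁ - kappa pt y M₀ (x₂ i) with hΔκ
  set Δa : ι → ℝ := fun i => apart y y₀ M₀ d x₁ - apart y y₀ M₀ d (x₂ i) with hΔa
  set Bad : Finset ℝ :=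
    M₀.image (fun i => if Δκ i = Δa i then 0 else Δκ i / (Δκ i - Δa i)) with hBad
  obtain ⟨η, hη0, hηε, hηBad⟩ := exists_eta hε0 Bad
  have hη1 : η ≤ 1 := hηε.trans hε1
  set q : (∀ i, α i) → ℝ := qfun pt y y₀ M₀ d η with hq
  have hqpos : ∀ w, 0 < q w := qfun_pos hptD hptpos hη0 hη1
  have hqloc0 : LocalOn (insert y M₀) q := qfun_local hyM0
  have hqB : LocalOn (insert y S) q :=
    hqloc0.mono (Finset.insert_subset_insert y hM0S)
  have hqsum : ∀ w : ∀ i, α i, ∑ v : α y, q (Function.update w y v) = 1 :=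
    qfun_sum hptD hptpos hyM0
  set p' : (∀ i, α i) → ℝ := pert y S pt q with hp'
  -- locality characterization
  have hloc_iff : ∀ M : Finset ι, M ⊆ S → (LocalOn (insert y M) q ↔ M₀ ⊆ M) := by
    intro M hMS
    constructor
    · intro hloc i hi
      by_contra hiM
      have hiy : i ≠ y := fun h => hyM0 (h ▸ hi)
      have hk2 : 2 ≤ Fintype.card (α y) := by
        have h1 : 0 < Fintype.card (α y) := Fintype.card_pos
        rcases Nat.lt_or_ge (Fintype.card (α y)) 2 with hlt | hge
        · have hcy : Fintype.card (α y) = 1 := by omega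
          have : M₀ = ∅ := bd_card_y hp hyS hM₀ hcy
          rw [this] at hi
          exact absurd hi (Finset.notMem_empty i)
        · exact hge
      have hagree : ∀ j ∈ insert y M, x₁ j = x₂ i j := by
        intro j hj
        rcases Finset.mem_insert.1 hj with rfl | hjM
        · exact (Function.update_of_ne hiy.symm (eF i) x₁).symm
        · have hji : j ≠ i := fun h => hiM (h ▸ hjM)
          exact (Function.update_of_ne hji (eF i) x₁).symm
      have hqeq : q x₁ = q (x₂ i) := hloc x₁ (x₂ i) hagree
      have hΔa_ne : Δa i ≠ 0 :=
        sub_ne_zero.2 (apart_flip_ne hyM0 hi hk2 y₀ d (heF i hi))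
      have hbadne : η ≠ (if Δκ i = Δa i then 0 else Δκ i / (Δκ i - Δa i)) := by
        intro h
        exact hηBad (h ▸ Finset.mem_image_of_mem _ hi)
      refine eta_good hΔa_ne hbadne ?_
      simp only [hq, qfun, hΔκ, hΔa] at hqeq ⊢
      linear_combination hqeq
    · intro hM0M
      exact hqloc0.mono (Finset.insert_subset_insert y hM0M)
  have hblanket : ∀ M : Finset ι, MarkovBlanket p' y S M ↔ (M ⊆ S ∧ M₀ ⊆ M) := by
    intro M
    constructor
    · rintro ⟨hMS, hCI⟩
      exact ⟨hMS, (hloc_iff M hMS).1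
        ((condIndep_pert_iff hptD hptpos hyS hqpos hqB hqsum hMS).1 hCI)⟩
    · rintro ⟨hMS, hM0M⟩
      exact ⟨hMS, (condIndep_pert_iff hptD hptpos hyS hqpos hqB hqsum hMS).2
        ((hloc_iff M hMS).2 hM0M)⟩
  have hbd : MarkovBoundary p' y S M₀ := by
    constructor
    · exact (hblanket M₀).2 ⟨hM0S, Finset.Subset.rfl⟩
    · intro M' hM' hbl
      have h1 := ((hblanket M').1 hbl).2
      exact (Finset.ssubset_iff_subset_ne.1 hM').2
        (Finset.Subset.antisymm hM'.1 h1)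
  have huniq : ∀ M, MarkovBoundary p' y S M → M = M₀ := by
    intro M hM
    have h1 := (hblanket M).1 hM.1
    by_contra hne
    have hss : M₀ ⊂ M := Finset.ssubset_iff_subset_ne.2 ⟨h1.2, fun h => hne h.symm⟩
    exact hM.2 M₀ hss ((hblanket M₀).2 ⟨hM0S, Finset.Subset.rfl⟩)
  have hIsD : IsDist p' := isDist_pert hptD hptpos hyS hqpos hqB hqsum
  -- total variation bound
  have htv : tvDist p p' < δ := by
    set s : ℝ := Real.sqrt (3 * ε) with hs
    have hs2τ : s ≤ 2 * τ := by
      have h1 : 3 * ε ≤ (2 * τ) ^ 2 := by nlinarith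
      have h2 := Real.sqrt_le_sqrt h1
      rwa [Real.sqrt_sq (by linarith : (0:ℝ) ≤ 2 * τ)] at h2
    have hA : ∑ w : ∀ i, α i, |p w - pt w| ≤ 2 * ε := by
      have hpoint : ∀ w, |p w - pt w|
          ≤ ε * (p w + (Fintype.card (∀ i, α i) : ℝ)⁻¹) := by
        intro w
        have he1 : p w - pt w = ε * (p w - (Fintype.card (∀ i, α i) : ℝ)⁻¹) := by
          simp only [hptdef, mixu]
          ring
        rw [he1, abs_mul, abs_of_pos hε0]
        have h2 : |p w - (Fintype.card (∀ i, α i) : ℝ)⁻¹|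
            ≤ p w + (Fintype.card (∀ i, α i) : ℝ)⁻¹ := by
          have h3 := hp.1 w
          have h4 : (0:ℝ) ≤ (Fintype.card (∀ i, α i) : ℝ)⁻¹ :=
            le_of_lt (inv_pos.2 card_pi_pos)
          rw [abs_le]
          constructor <;> linarith
        exact mul_le_mul_of_nonneg_left h2 (le_of_lt hε0)
      calc ∑ w : ∀ i, α i, |p w - pt w|
          ≤ ∑ w : ∀ i, α i, ε * (p w + (Fintype.card (∀ i, α i) : ℝ)⁻¹) :=
            Finset.sum_le_sum fun w _ => hpoint w
        _ = ε * (∑ w : ∀ i, α i, p w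
              + ∑ w : ∀ i, α i, (Fintype.card (∀ i, α i) : ℝ)⁻¹) := by
            rw [← Finset.sum_add_distrib, Finset.mul_sum]
        _ = 2 * ε := by
            rw [hp.2, Finset.sum_const, Finset.card_univ, nsmul_eq_mul,
              mul_inv_cancel₀ (ne_of_gt (card_pi_pos (α := α)))]
            ring
    have hB : ∑ w : ∀ i, α i, |pt w - p' w| ≤ N * (2 * s + 2 * η) := by
      have h1 := tv_pert (y := y) (S := S) (q := q) hptD hptpos hqB
      have h2 : ∑ w : ∀ i, α i,
          |margProb pt (insert y S) w - q w * margProb pt S w|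
            ≤ N * (2 * s + 2 * η) := by
        calc ∑ w : ∀ i, α i,
            |margProb pt (insert y S) w - q w * margProb pt S w|
            ≤ ∑ _w : ∀ i, α i, (2 * s + 2 * η) := by
              refine Finset.sum_le_sum fun w _ => ?_
              exact pointwise_bound hp hyS hM0S hF3 hε0 hε1 (le_of_lt hη0) hη1 y₀ d w
          _ = N * (2 * s + 2 * η) := by
              rw [Finset.sum_const, Finset.card_univ, nsmul_eq_mul]
        
      have h3 : (Kc α (insert y S) : ℝ)⁻¹ ≤ 1 := by
        have h4 : (1:ℝ) ≤ (Kc α (insert y S) : ℝ) := by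
          have : 1 ≤ Kc α (insert y S) := Fintype.card_pos
          exact_mod_cast this
        exact inv_le_one_of_one_le₀ h4
      rw [h1]
      have h5 : 0 ≤ ∑ w : ∀ i, α i,
          |margProb pt (insert y S) w - q w * margProb pt S w| :=
        Finset.sum_nonneg fun w _ => abs_nonneg _
      calc (Kc α (insert y S) : ℝ)⁻¹ * ∑ w : ∀ i, α i,
            |margProb pt (insert y S) w - q w * margProb pt S w|
          ≤ 1 * ∑ w : ∀ i, α i,
            |margProb pt (insert y S) w - q w * margProb pt S w| :=
            mul_le_mul_of_nonneg_right h3 h5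
        _ ≤ N * (2 * s + 2 * η) := by rw [one_mul]; exact h2
    have hsum : ∑ w : ∀ i, α i, |p w - p' w| ≤ 2 * ε + N * (2 * s + 2 * η) := by
      calc ∑ w : ∀ i, α i, |p w - p' w|
          ≤ ∑ w : ∀ i, α i, (|p w - pt w| + |pt w - p' w|) :=
            Finset.sum_le_sum fun w _ => abs_sub_le _ _ _
        _ = ∑ w : ∀ i, α i, |p w - pt w| + ∑ w : ∀ i, α i, |pt w - p' w| :=
            Finset.sum_add_distrib
        _ ≤ 2 * ε + N * (2 * s + 2 * η) := by linarith
    have hfinal : 2 * ε + N * (2 * s + 2 * η) ≤ (2 + 6 * N) * τ := by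
      have h1 : 2 * s + 2 * η ≤ 4 * τ + 2 * ε := by linarith
      have h2 : N * (2 * s + 2 * η) ≤ N * (4 * τ + 2 * ε) :=
        mul_le_mul_of_nonneg_left h1 (by linarith)
      have h3 : N * (4 * τ + 2 * ε) ≤ N * (4 * τ + τ) := by
        have : 2 * ε ≤ τ := by linarith
        have := mul_le_mul_of_nonneg_left (by linarith : 4 * τ + 2 * ε ≤ 4 * τ + τ)
          (by linarith : (0:ℝ) ≤ N)
        linarith
      have h4 : N * (4 * τ + τ) = 5 * N * τ := by ring
      nlinarith
    have hτδ2 : (2 + 6 * N) * τ ≤ δ := by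
      have h1 : (2 + 6 * N) * τ ≤ (2 + 6 * N) * (δ / (2 + 6 * N)) :=
        mul_le_mul_of_nonneg_left hτδ (by linarith)
      have h2 : (2 + 6 * N) * (δ / (2 + 6 * N)) = δ := by
        field_simp
      linarith
    unfold tvDist
    have : ∑ w : ∀ i, α i, |p w - p' w| ≤ δ := le_trans hsum (hfinal.trans hτδ2)
    linarith
  exact ⟨p', hIsD, htv, hbd, huniq⟩

end
end

section
/- Let Y be a discrete random variable and S a finite set of discrete random variables with Y ∉ S. If W ∈ S is not essential for Y (i.e., Y is conditionally independent of W given S \ {W}), then there exists a Markov boundary of Y within S that does not contain W. -/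
open scoped BigOperators

noncomputable section

variable {ι : Type*} [Fintype ι] [DecidableEq ι]
variable {α : ι → Type*} [∀ i, Fintype (α i)] [∀ i, DecidableEq (α i)]

variable [∀ i, Nonempty (α i)]

/-- other half of Lemma 5: if `W ∈ S` is not essential for `Y`, then
some Markov boundary of `Y` within `S` does not contain `W`. -/
theorem non_essential_avoided_by_some_markov_boundary
    (p : (∀ i, α i) → ℝ) (hp : IsDist p)
    (y : ι) (S : Finset ι) (hyS : y ∉ S)
    (W : ι) (hWS : W ∈ S)
    (hness : CondIndep p {y} {W} (S.erase W)) :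
    ∃ M, MarkovBoundary p y S M ∧ W ∉ M := by
  classical
  have hsd : S \ S.erase W = {W} := by
    ext a
    simp only [Finset.mem_sdiff, Finset.mem_erase, Finset.mem_singleton]
    constructor
    · rintro ⟨ha, h2⟩
      by_contra hne
      exact h2 ⟨hne, ha⟩
    · rintro rfl
      exact ⟨hWS, fun h => h.1 rfl⟩
  have hbl : MarkovBlanket p y S (S.erase W) := by
    refine ⟨Finset.erase_subset _ _, ?_⟩
    rw [hsd]
    exact hness
  -- family of blankets contained in S.erase W
  set F := (S.erase W).powerset.filter (fun M => MarkovBlanket p y S M) with hF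
  have hne : F.Nonempty := ⟨S.erase W, by
    simp [hF, Finset.mem_filter, Finset.mem_powerset, hbl]⟩
  obtain ⟨M, hMF, hmin⟩ := F.exists_min_image (fun M => M.card) hne
  simp only [hF, Finset.mem_filter, Finset.mem_powerset] at hMF
  obtain ⟨hMsub, hMbl⟩ := hMF
  refine ⟨M, ⟨hMbl, ?_⟩, fun hWM => (Finset.mem_erase.mp (hMsub hWM)).1 rfl⟩
  intro M' hM' hM'bl
  have hM'F : M' ∈ F := by
    simp only [hF, Finset.mem_filter, Finset.mem_powerset]
    exact ⟨(hM'.subset).trans hMsub, hM'bl⟩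
  have := hmin M' hM'F
  exact absurd this (not_le.mpr (Finset.card_lt_card hM'))

end
end
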